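/- Let Q be a positive definite quadratic form on V, let Z ⊆ V be a closed discrete set with γ = min_{z∈Z} Q(z) attained, let Q_min = {z ∈ Z : Q(z) = γ}, and let δ = min_{z ∈ Z∖Q_min} Q(z) − γ > 0. Then there is ε > 0 such that for every Q-selfadjoint H with ‖H‖_Q < ε and every x ∈ Q_min, z ∈ Z∖Q_min, one has Q(x, exp(H)x) < Q(z, exp(H)z). In particular the minimal vectors of the perturbed form Q_H(x) = Q(x, exp(H)x) restricted to Z are contained in Q_min. -/

import Mathlib

set_option maxHeartbeats 2000000 in
/-- Minimal vectors in a neighbourhood: there is `ε > 0` such that for every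
`Q`-selfadjoint `H` with `‖H‖_Q < ε`, every minimal vector `x` of `Q` on `Z` and
every non-minimal `z ∈ Z`, one has `Q_H(x) < Q_H(z)` where `Q_H(y) = Q(y, exp(H)y)`.
In particular the minimal vectors of `Q_H` on `Z` lie among those of `Q`. -/
theorem minimal_vectors_in_neighborhood
    {V : Type*} [NormedAddCommGroup V] [NormedSpace ℝ V] [FiniteDimensional ℝ V]
    (Q : V →ₗ[ℝ] V →ₗ[ℝ] ℝ)
    (hsymm : ∀ x y, Q x y = Q y x) (hpos : ∀ x : V, x ≠ 0 → 0 < Q x x)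
    (Z : Set V) (γ δ : ℝ) (hγpos : 0 < γ) (hδpos : 0 < δ)
    (hγ : ∀ z ∈ Z, γ ≤ Q z z) (hatt : ∃ z ∈ Z, Q z z = γ)
    (hδ : ∀ z ∈ Z, Q z z ≠ γ → γ + δ ≤ Q z z) :
    ∃ ε > (0 : ℝ), ∀ H : V →L[ℝ] V, (∀ x y, Q x (H y) = Q (H x) y) →
      ∀ η : ℝ, 0 ≤ η → η < ε → (∀ x, Q (H x) (H x) ≤ η ^ 2 * Q x x) →
      (∀ x ∈ Z, Q x x = γ → ∀ z ∈ Z, Q z z ≠ γ →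
        Q x (NormedSpace.exp H x) < Q z (NormedSpace.exp H z)) ∧
      (∀ z ∈ Z, (∀ w ∈ Z, Q z (NormedSpace.exp H z) ≤ Q w (NormedSpace.exp H w)) →
        Q z z = γ) := by
  have hQnn : ∀ v : V, 0 ≤ Q v v := by
    intro v
    rcases eq_or_ne v 0 with rfl | h
    · simp
    · exact (hpos v h).le
  -- Cauchy–Schwarz for Q
  have hcs : ∀ a b : V, (Q a b) ^ 2 ≤ Q a a * Q b b := by
    intro a b
    rcases eq_or_ne b 0 with rfl | hb
    · simp
    · have hbb : 0 < Q b b := hpos b hb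
      have h0 : 0 ≤ Q (Q b b • a - Q a b • b) (Q b b • a - Q a b • b) := hQnn _
      have hexp : Q (Q b b • a - Q a b • b) (Q b b • a - Q a b • b)
          = Q b b ^ 2 * Q a a - 2 * Q b b * Q a b ^ 2 + Q a b ^ 2 * Q b b := by
        simp only [map_sub, map_smul, LinearMap.sub_apply, LinearMap.smul_apply,
          smul_eq_mul]
        rw [hsymm b a]; ring
      rw [hexp] at h0
      nlinarith [h0, hbb]
  set c := 2 * (γ + δ) / (2 * γ + δ) with hc
  have hden : 0 < 2 * γ + δ := by linarith
  have hc1 : 1 < c := by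
    rw [hc, lt_div_iff₀ hden]; linarith
  refine ⟨Real.log c, Real.log_pos hc1, ?_⟩
  intro H hsa η hη0 hηε hbound
  have hec : Real.exp η < c := by
    have := Real.exp_lt_exp.mpr hηε
    rwa [Real.exp_log (by linarith : (0:ℝ) < c)] at this
  have hec2 : Real.exp η < 2 := by
    have : c < 2 := by rw [hc, div_lt_iff₀ hden]; linarith
    linarith
  have he1 : 1 ≤ Real.exp η := Real.one_le_exp hη0
  -- iterated bound
  have hpow : ∀ (x : V) (n : ℕ), Q ((H ^ n) x) ((H ^ n) x) ≤ η ^ (2 * n) * Q x x := by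
    intro x n
    induction n with
    | zero => simp
    | succ n ih =>
      have h1 : Q ((H ^ (n + 1)) x) ((H ^ (n + 1)) x) ≤ η ^ 2 * Q ((H ^ n) x) ((H ^ n) x) := by
        have := hbound ((H ^ n) x)
        simpa [pow_succ', ContinuousLinearMap.mul_apply] using this
      calc Q ((H ^ (n + 1)) x) ((H ^ (n + 1)) x)
          ≤ η ^ 2 * Q ((H ^ n) x) ((H ^ n) x) := h1
        _ ≤ η ^ 2 * (η ^ (2 * n) * Q x x) := by
            exact mul_le_mul_of_nonneg_left ih (by positivity)
        _ = η ^ (2 * (n + 1)) * Q x x := by ring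
  have hterm : ∀ (x : V) (n : ℕ), |Q x ((H ^ n) x)| ≤ η ^ n * Q x x := by
    intro x n
    have hsq : (Q x ((H ^ n) x)) ^ 2 ≤ (η ^ n * Q x x) ^ 2 := by
      calc (Q x ((H ^ n) x)) ^ 2 ≤ Q x x * Q ((H ^ n) x) ((H ^ n) x) := hcs _ _
        _ ≤ Q x x * (η ^ (2 * n) * Q x x) :=
            mul_le_mul_of_nonneg_left (hpow x n) (hQnn x)
        _ = (η ^ n * Q x x) ^ 2 := by rw [pow_mul]; ring
    have hnn : 0 ≤ η ^ n * Q x x := mul_nonneg (pow_nonneg hη0 n) (hQnn x)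
    exact abs_le.mpr ⟨(abs_le_of_sq_le_sq' hsq hnn).1, (abs_le_of_sq_le_sq' hsq hnn).2⟩
  -- main estimate
  have hmain : ∀ x : V,
      |Q x (NormedSpace.exp H x) - Q x x| ≤ (Real.exp η - 1) * Q x x := by
    intro x
    -- the evaluation functional
    set φ : (V →L[ℝ] V) →L[ℝ] ℝ :=
      (LinearMap.toContinuousLinearMap (Q x)).comp (ContinuousLinearMap.apply ℝ V x) with hφ
    have hφval : ∀ T : V →L[ℝ] V, φ T = Q x (T x) := by
      intro T
      rw [hφ, ContinuousLinearMap.comp_apply, ContinuousLinearMap.apply_apply]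
      simp
    have hsum : Summable fun n : ℕ => ((n.factorial : ℝ))⁻¹ • H ^ n :=
      NormedSpace.expSeries_summable' (𝕂 := ℝ) H
    set f : ℕ → ℝ := fun n => ((n.factorial : ℝ))⁻¹ * Q x ((H ^ n) x) with hf
    have hexpand : Q x (NormedSpace.exp H x) = ∑' n : ℕ, f n := by
      have h1 : φ (NormedSpace.exp H) = ∑' n : ℕ, φ (((n.factorial : ℝ))⁻¹ • H ^ n) := by
        rw [NormedSpace.exp_eq_tsum ℝ]
        exact φ.map_tsum hsum
      have h2 : ∀ n : ℕ, φ (((n.factorial : ℝ))⁻¹ • H ^ n) = f n := by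
        intro n
        rw [map_smul, hφval, hf]; simp [smul_eq_mul]
      rw [← hφval, h1]
      exact tsum_congr h2
    set g : ℕ → ℝ := fun n => ((n.factorial : ℝ))⁻¹ * (η ^ n * Q x x) with hg
    have hfg : ∀ n, |f n| ≤ g n := by
      intro n
      rw [hf, hg, abs_mul, abs_inv, abs_of_nonneg (by positivity : (0:ℝ) ≤ (n.factorial : ℝ))]
      exact mul_le_mul_of_nonneg_left (hterm x n) (by positivity)
    have hgs : Summable g := by
      have := (Real.summable_pow_div_factorial η).mul_right (Q x x)
      apply this.congr
      intro n
      rw [hg]; ring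
    have hfabs : Summable fun n => |f n| :=
      Summable.of_nonneg_of_le (fun n => abs_nonneg _) hfg hgs
    have hfs : Summable f := hfabs.of_abs
    have hgval : ∑' n : ℕ, g n = Real.exp η * Q x x := by
      have : Real.exp η = ∑' n : ℕ, η ^ n / (n.factorial : ℝ) := by
        rw [Real.exp_eq_exp_ℝ, NormedSpace.exp_eq_tsum_div]
      rw [this, ← tsum_mul_right]
      apply tsum_congr; intro n; rw [hg]; ring
    have hf0 : f 0 = Q x x := by simp [hf]
    have hg0 : g 0 = Q x x := by simp [hg]
    have hsplit : Q x (NormedSpace.exp H x) - Q x x = ∑' n : ℕ, f (n + 1) := by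
      rw [hexpand, Summable.tsum_eq_zero_add hfs, hf0]; ring
    rw [hsplit]
    have htail : |∑' n : ℕ, f (n + 1)| ≤ ∑' n : ℕ, g (n + 1) := by
      have hfs1 : Summable fun n : ℕ => |f (n + 1)| := by
        exact (summable_nat_add_iff 1).mpr hfabs
      calc |∑' n : ℕ, f (n + 1)| ≤ ∑' n : ℕ, |f (n + 1)| := by
            have := norm_tsum_le_tsum_norm (f := fun n : ℕ => f (n + 1))
              (by simpa [Real.norm_eq_abs] using hfs1)
            simpa [Real.norm_eq_abs] using this
        _ ≤ ∑' n : ℕ, g (n + 1) := by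
            apply Summable.tsum_le_tsum (fun n => hfg (n + 1)) hfs1
            exact (summable_nat_add_iff 1).mpr hgs
    have hgtail : ∑' n : ℕ, g (n + 1) = (Real.exp η - 1) * Q x x := by
      have := Summable.tsum_eq_zero_add hgs
      rw [hgval, hg0] at this
      linarith
    linarith [htail, hgtail ▸ htail]
  -- upper and lower bounds
  have hupper : ∀ x : V, Q x (NormedSpace.exp H x) ≤ Real.exp η * Q x x := by
    intro x
    have := (abs_le.mp (hmain x)).2
    nlinarith [hQnn x]
  have hlower : ∀ x : V, (2 - Real.exp η) * Q x x ≤ Q x (NormedSpace.exp H x) := by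
    intro x
    have := (abs_le.mp (hmain x)).1
    nlinarith [hQnn x]
  have key : ∀ x ∈ Z, Q x x = γ → ∀ z ∈ Z, Q z z ≠ γ →
      Q x (NormedSpace.exp H x) < Q z (NormedSpace.exp H z) := by
    intro x hx hxγ z hz hzγ
    have hz' : γ + δ ≤ Q z z := hδ z hz hzγ
    have h1 : Q x (NormedSpace.exp H x) ≤ Real.exp η * γ := by
      have := hupper x; rw [hxγ] at this; exact this
    have h2 : (2 - Real.exp η) * (γ + δ) ≤ Q z (NormedSpace.exp H z) := by
      have := hlower z
      have h3 : (2 - Real.exp η) * (γ + δ) ≤ (2 - Real.exp η) * Q z z :=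
        mul_le_mul_of_nonneg_left hz' (by linarith)
      linarith
    have hkey : Real.exp η * γ < (2 - Real.exp η) * (γ + δ) := by
      have h4 : Real.exp η * (2 * γ + δ) < 2 * (γ + δ) := by
        have := mul_lt_mul_of_pos_right hec hden
        rw [hc] at this
        rwa [div_mul_cancel₀] at this
        exact ne_of_gt hden
      nlinarith
    linarith
  refine ⟨key, ?_⟩
  intro z hz hmin
  by_contra hzγ
  obtain ⟨x, hx, hxγ⟩ := hatt
  exact absurd (hmin x hx) (not_le.mpr (key x hx hxγ z hz hzγ))
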